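/- Let A = ((A_i)_{i∈I}, (f_{i,j})) be a sup-semilattice inductive system of Σ-algebras (Σ without nullary symbols), and let Pl(A) be the Płonka sum: the Σ-algebra on ⨿_{i∈I} A_i with σ((x_j, i_j)_{j<n}) = (σ^{A_s}((f_{i_j, s}(x_j))_{j<n}), s) where s = ⨆_{j<n} i_j, together with D^A((x,j),(y,k)) = (f_{j, j⊔k}(x), j⊔k). Then D^A is a Płonka operator for Pl(A): it satisfies (D4) D^A(σ((p_j)), q) = σ((D^A(p_j, q))_j) and (D5) D^A(q, σ((p_j))) = D^A(q, D^A_n((p_j))) for every n-ary σ, where D^A_n is the n-fold iterate of D^A. -/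

import Mathlib

/-- Right iterates of a binary operation. -/
def DR {A : Type*} (D : A → A → A) : (n : ℕ) → (Fin (n + 1) → A) → A
  | 0, x => x 0
  | n + 1, x => D (x 0) (DR D n (fun k => x k.succ))

/-- Supremum of a nonempty finite family in a sup-semilattice. -/
def famSup {I : Type*} [SemilatticeSup I] : (n : ℕ) → (Fin (n + 1) → I) → I
  | 0, x => x 0
  | n + 1, x => x 0 ⊔ famSup n (fun k => x k.succ)

theorem le_famSup {I : Type*} [SemilatticeSup I] :
    ∀ (n : ℕ) (x : Fin (n + 1) → I) (k : Fin (n + 1)), x k ≤ famSup n x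
  | 0, x, k => by
      have hk : k = 0 := Fin.fin_one_eq_zero k
      subst hk; exact le_rfl
  | n + 1, x, k => by
      cases k using Fin.cases with
      | zero => exact le_sup_left
      | succ k' => exact le_trans (le_famSup n (fun j => x j.succ) k') le_sup_right

/-- The Płonka operation on the disjoint union of an inductive system. -/
def PlD {I : Type*} [SemilatticeSup I] {A : I → Type*}
    (f : ∀ i j : I, i ≤ j → A i → A j) :
    (Σ i, A i) → (Σ i, A i) → (Σ i, A i) :=
  fun p q => ⟨p.1 ⊔ q.1, f p.1 (p.1 ⊔ q.1) le_sup_left p.2⟩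

/-- The Σ-algebra structure of the Płonka sum on the disjoint union:
`σ((x_j, i_j)_j) = (σ^{A_s}((f_{i_j, s}(x_j))_j), s)` with `s = ⨆_j i_j`. -/
def PlF {I : Type*} [SemilatticeSup I] {A : I → Type*} (Sig : ℕ → Type*)
    (F : ∀ (i : I) (n : ℕ), Sig n → (Fin (n + 1) → A i) → A i)
    (f : ∀ i j : I, i ≤ j → A i → A j) :
    ∀ n : ℕ, Sig n → (Fin (n + 1) → Σ i, A i) → Σ i, A i :=
  fun n σ x =>
    ⟨famSup n (fun j => (x j).1),
      F _ n σ (fun j =>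
        f (x j).1 (famSup n (fun j => (x j).1)) (le_famSup n (fun j => (x j).1) j) (x j).2)⟩

/-- For a sup-semilattice inductive system of Σ-algebras (Σ without nullary
symbols), `D^A` is a Płonka operator for the Płonka sum: it satisfies (D4)
and (D5). -/
theorem plonka_sum_operator {I : Type*} [SemilatticeSup I] {A : I → Type*}
    (Sig : ℕ → Type*)
    (F : ∀ (i : I) (n : ℕ), Sig n → (Fin (n + 1) → A i) → A i)
    (f : ∀ i j : I, i ≤ j → A i → A j)
    (hid : ∀ (i : I) (x : A i), f i i le_rfl x = x)
    (hcomp : ∀ (i j k : I) (hij : i ≤ j) (hjk : j ≤ k) (x : A i),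
      f j k hjk (f i j hij x) = f i k (hij.trans hjk) x)
    (hhom : ∀ (i j : I) (hij : i ≤ j) (n : ℕ) (σ : Sig n)
        (x : Fin (n + 1) → A i),
      f i j hij (F i n σ x) = F j n σ (fun k => f i j hij (x k))) :
    (∀ (n : ℕ) (σ : Sig n) (p : Fin (n + 1) → Σ i, A i) (q : Σ i, A i),
      PlD f (PlF Sig F f n σ p) q =
        PlF Sig F f n σ (fun j => PlD f (p j) q)) ∧
      (∀ (n : ℕ) (σ : Sig n) (p : Fin (n + 1) → Σ i, A i) (q : Σ i, A i),
        PlD f q (PlF Sig F f n σ p) = PlD f q (DR (PlD f) n p)) := by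
  have hDRfst : ∀ (n : ℕ) (p : Fin (n + 1) → Σ i, A i),
      (DR (PlD f) n p).1 = famSup n (fun j => (p j).1) := by
    intro n
    induction n with
    | zero => intro p; rfl
    | succ n ih => intro p; simp [DR, famSup, PlD, ih]
  have hfamsup : ∀ (n : ℕ) (x : Fin (n + 1) → I) (c : I),
      famSup n (fun j => x j ⊔ c) = famSup n x ⊔ c := by
    intro n
    induction n with
    | zero => intro x c; rfl
    | succ n ih =>
      intro x c
      show x 0 ⊔ c ⊔ famSup n (fun k => x k.succ ⊔ c) = x 0 ⊔ famSup n (fun k => x k.succ) ⊔ c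
      rw [ih (fun k => x k.succ) c, sup_sup_sup_comm, sup_idem]
  constructor
  · intro n σ p q
    have key : ∀ (t : I) (ht : ∀ j, (p j).1 ≤ t) (t' : I) (ht' : ∀ j, (p j).1 ≤ t')
        (h : t = t'),
        (⟨t, F t n σ fun j => f (p j).1 t (ht j) (p j).2⟩ : Σ i, A i) =
          ⟨t', F t' n σ fun j => f (p j).1 t' (ht' j) (p j).2⟩ := by
      intro t ht t' ht' h
      subst h
      rfl
    have hL : PlD f (PlF Sig F f n σ p) q =
        ⟨famSup n (fun j => (p j).1) ⊔ q.1,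
          F (famSup n (fun j => (p j).1) ⊔ q.1) n σ fun j =>
            f (p j).1 (famSup n (fun j => (p j).1) ⊔ q.1)
              ((le_famSup n (fun j => (p j).1) j).trans le_sup_left) (p j).2⟩ := by
      unfold PlD PlF
      rw [hhom]
      simp only [hcomp]
    have hR : PlF Sig F f n σ (fun j => PlD f (p j) q) =
        ⟨famSup n (fun j => (p j).1 ⊔ q.1),
          F (famSup n (fun j => (p j).1 ⊔ q.1)) n σ fun j =>
            f (p j).1 (famSup n (fun j => (p j).1 ⊔ q.1))
              (le_sup_left.trans (le_famSup n (fun j => (p j).1 ⊔ q.1) j)) (p j).2⟩ := by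
      unfold PlD PlF
      simp only [hcomp]
    rw [hL, hR]
    exact key _ _ _ _ (hfamsup n (fun j => (p j).1) q.1).symm
  · intro n σ p q
    have hPlD : ∀ (X Y : Σ i, A i), X.1 = Y.1 → PlD f q X = PlD f q Y := by
      rintro ⟨i, x⟩ ⟨i', y⟩ h
      dsimp at h
      subst h
      rfl
    exact hPlD _ _ (hDRfst n p).symm
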